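/- arXiv:2011.01995 — 2 statements merged into one kernel-verified Lean document; each statement's English description precedes it below -/
import Mathlib

section
/- For the classical mean-field energy E_G(α) = ω α² − √(Ω²/4 + 4 g² α²) with α ∈ ℝ, ω, Ω, g > 0: if g ≤ g_p := √(ωΩ)/2, then E_G attains its global minimum uniquely at α = 0; if g > g_p, then the global minima are exactly at α = ± α_g with α_g² = (g²/ω²)(1 − (g_p/g)⁴). -/
/-- Mean-field minimization of the Rabi ground-state energy
`E_G(α) = ω α² − √(Ω²/4 + 4 g² α²)`: for `g ≤ g_p = √(ωΩ)/2` the unique global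
minimum is at `α = 0`; for `g > g_p` the global minima are exactly `α = ± α_g`
with `α_g² = (g²/ω²)(1 − (g_p/g)⁴)`. -/
theorem stmt_3 (ω Ω g : ℝ) (hω : 0 < ω) (hΩ : 0 < Ω) (hg : 0 < g) :
    let gp : ℝ := Real.sqrt (ω * Ω) / 2
    let E : ℝ → ℝ := fun α => ω * α ^ 2 - Real.sqrt (Ω ^ 2 / 4 + 4 * g ^ 2 * α ^ 2)
    let αg : ℝ := Real.sqrt (g ^ 2 / ω ^ 2 * (1 - (gp / g) ^ 4))
    (g ≤ gp → ∀ α : ℝ, α ≠ 0 → E 0 < E α) ∧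
    (gp < g →
      (∀ α : ℝ, E αg ≤ E α) ∧
      (∀ α : ℝ, E α = E αg → α = αg ∨ α = -αg)) := by
  intro gp E αg
  have hωΩ : (0:ℝ) ≤ ω * Ω := by positivity
  have hgp2 : gp ^ 2 = ω * Ω / 4 := by
    show (Real.sqrt (ω * Ω) / 2) ^ 2 = ω * Ω / 4
    rw [div_pow, Real.sq_sqrt hωΩ]
    norm_num
  have hE0 : E 0 = -(Ω / 2) := by
    show ω * 0 ^ 2 - Real.sqrt (Ω ^ 2 / 4 + 4 * g ^ 2 * 0 ^ 2) = -(Ω / 2)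
    have h : Ω ^ 2 / 4 + 4 * g ^ 2 * 0 ^ 2 = (Ω / 2) ^ 2 := by ring
    rw [h, Real.sqrt_sq (by linarith)]
    ring
  constructor
  · intro hle α hα
    have hg2 : g ^ 2 ≤ ω * Ω / 4 := by
      rw [← hgp2]; exact pow_le_pow_left₀ hg.le hle 2
    have hα2 : 0 < α ^ 2 := by positivity
    have hpos : 0 < ω * α ^ 2 + Ω / 2 := by positivity
    have hlt : Real.sqrt (Ω ^ 2 / 4 + 4 * g ^ 2 * α ^ 2) < ω * α ^ 2 + Ω / 2 := by
      rw [show Real.sqrt (Ω ^ 2 / 4 + 4 * g ^ 2 * α ^ 2) < ω * α ^ 2 + Ω / 2 ↔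
          Ω ^ 2 / 4 + 4 * g ^ 2 * α ^ 2 < (ω * α ^ 2 + Ω / 2) ^ 2 from Real.sqrt_lt' hpos]
      nlinarith [mul_le_mul_of_nonneg_right hg2 hα2.le,
        mul_pos (mul_pos hω hω) (mul_pos hα2 hα2)]
    have hEα : E α = ω * α ^ 2 - Real.sqrt (Ω ^ 2 / 4 + 4 * g ^ 2 * α ^ 2) := rfl
    rw [hE0, hEα]
    linarith
  · intro hglt
    have hgg : ω * Ω / 4 < g ^ 2 := by
      rw [← hgp2]
      exact pow_lt_pow_left₀ hglt (by positivity) (by norm_num)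
    have hinner : g ^ 2 / ω ^ 2 * (1 - (gp / g) ^ 4) = g ^ 2 / ω ^ 2 - Ω ^ 2 / (16 * g ^ 2) := by
      have h4 : (gp / g) ^ 4 = (gp ^ 2) ^ 2 / (g ^ 2) ^ 2 := by ring
      rw [h4, hgp2]
      field_simp
      ring
    have hnn : 0 ≤ g ^ 2 / ω ^ 2 - Ω ^ 2 / (16 * g ^ 2) := by
      rw [sub_nonneg, div_le_div_iff₀ (by positivity) (by positivity)]
      nlinarith [mul_pos hω hΩ]
    have hαg2 : αg ^ 2 = g ^ 2 / ω ^ 2 - Ω ^ 2 / (16 * g ^ 2) := by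
      show Real.sqrt (g ^ 2 / ω ^ 2 * (1 - (gp / g) ^ 4)) ^ 2 = _
      rw [Real.sq_sqrt (by rw [hinner]; exact hnn), hinner]
    have hαgnn : 0 ≤ αg := Real.sqrt_nonneg _
    have hs0 : (0:ℝ) < 2 * g ^ 2 / ω := by positivity
    have huαg : Real.sqrt (Ω ^ 2 / 4 + 4 * g ^ 2 * αg ^ 2) = 2 * g ^ 2 / ω := by
      have h : Ω ^ 2 / 4 + 4 * g ^ 2 * αg ^ 2 = (2 * g ^ 2 / ω) ^ 2 := by
        rw [hαg2]; field_simp; ring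
      rw [h, Real.sqrt_sq hs0.le]
    have key : ∀ α : ℝ, E α =
        ω / (4 * g ^ 2) * (Real.sqrt (Ω ^ 2 / 4 + 4 * g ^ 2 * α ^ 2) - 2 * g ^ 2 / ω) ^ 2
          + E αg := by
      intro α
      have hunn : (0:ℝ) ≤ Ω ^ 2 / 4 + 4 * g ^ 2 * α ^ 2 := by positivity
      have hu2 : Real.sqrt (Ω ^ 2 / 4 + 4 * g ^ 2 * α ^ 2) ^ 2 = Ω ^ 2 / 4 + 4 * g ^ 2 * α ^ 2 :=
        Real.sq_sqrt hunn
      show ω * α ^ 2 - Real.sqrt (Ω ^ 2 / 4 + 4 * g ^ 2 * α ^ 2) = _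
          + (ω * αg ^ 2 - Real.sqrt (Ω ^ 2 / 4 + 4 * g ^ 2 * αg ^ 2))
      rw [huαg, hαg2]
      generalize hU : Real.sqrt (Ω ^ 2 / 4 + 4 * g ^ 2 * α ^ 2) = u at hu2 ⊢
      field_simp
      linear_combination (-(16 * ω ^ 2)) * hu2
    constructor
    · intro α
      have h := key α
      have hnn2 : 0 ≤ ω / (4 * g ^ 2) *
          (Real.sqrt (Ω ^ 2 / 4 + 4 * g ^ 2 * α ^ 2) - 2 * g ^ 2 / ω) ^ 2 := by positivity
      rw [h]
      linarith
    · intro α hEq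
      have h := key α
      rw [hEq] at h
      have h0 : ω / (4 * g ^ 2) *
          (Real.sqrt (Ω ^ 2 / 4 + 4 * g ^ 2 * α ^ 2) - 2 * g ^ 2 / ω) ^ 2 = 0 := by linarith
      have hsq : (Real.sqrt (Ω ^ 2 / 4 + 4 * g ^ 2 * α ^ 2) - 2 * g ^ 2 / ω) ^ 2 = 0 := by
        rcases mul_eq_zero.mp h0 with hc | hc
        · exact absurd hc (by positivity)
        · exact hc
      have hu : Real.sqrt (Ω ^ 2 / 4 + 4 * g ^ 2 * α ^ 2) = 2 * g ^ 2 / ω := by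
        have := pow_eq_zero_iff (n := 2) (by norm_num) |>.mp hsq
        linarith
      have hu2 : Ω ^ 2 / 4 + 4 * g ^ 2 * α ^ 2 = (2 * g ^ 2 / ω) ^ 2 := by
        rw [← hu, Real.sq_sqrt (by positivity)]
      have hαsq : α ^ 2 = αg ^ 2 := by
        have h2 : Ω ^ 2 / 4 + 4 * g ^ 2 * αg ^ 2 = (2 * g ^ 2 / ω) ^ 2 := by
          rw [hαg2]; field_simp; ring
        have h3 : (4 * g ^ 2) * α ^ 2 = (4 * g ^ 2) * αg ^ 2 := by linarith
        exact mul_left_cancel₀ (by positivity) h3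
      rcases sq_eq_sq_iff_eq_or_eq_neg.mp hαsq with h | h
      · exact Or.inl h
      · exact Or.inr h
end

section
/- For a squeezed vacuum state with photon-number probabilities p(2m; ξ) = tanh(ξ)^{2m}/cosh(ξ) · (2m)!/(4^m (m!)²) and p(2m+1; ξ) = 0, the classical Fisher information of photon-number measurement with respect to ξ equals 2, i.e., Σ_m p(2m;ξ)^{-1} (∂_ξ p(2m;ξ))² = 2 for ξ > 0. -/
open Real Filter Finset

namespace Stmt12

noncomputable def cb (m : ℕ) : ℝ := (Nat.centralBinom m : ℝ) / 4 ^ m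

lemma cb_zero : cb 0 = 1 := by simp [cb, Nat.centralBinom]

lemma cb_pos (m : ℕ) : 0 < cb m :=
  div_pos (by exact_mod_cast Nat.centralBinom_pos m) (by positivity)

lemma cb_le_one (m : ℕ) : cb m ≤ 1 := by
  rw [cb, div_le_one (by positivity)]
  have h1 : (2 * m).choose m ≤ ∑ i ∈ range (2 * m + 1), (2 * m).choose i :=
    Finset.single_le_sum (fun i _ => Nat.zero_le _) (by simp [Finset.mem_range]; omega)
  rw [Nat.sum_range_choose] at h1
  have : Nat.centralBinom m ≤ 4 ^ m := by
    calc Nat.centralBinom m = (2 * m).choose m := rfl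
    _ ≤ 2 ^ (2 * m) := h1
    _ = 4 ^ m := by rw [pow_mul]; norm_num
  exact_mod_cast this

lemma cb_rec (m : ℕ) : 2 * ((m : ℝ) + 1) * cb (m + 1) = (2 * m + 1) * cb m := by
  have h := Nat.succ_mul_centralBinom_succ m
  have h' : ((m : ℝ) + 1) * (Nat.centralBinom (m + 1) : ℝ)
      = 2 * (2 * m + 1) * (Nat.centralBinom m : ℝ) := by exact_mod_cast h
  simp only [cb, pow_succ]
  have h4 : (4 : ℝ) ^ m ≠ 0 := by positivity
  field_simp
  linear_combination (2 : ℝ) * h'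

lemma summable_aux {x : ℝ} (hx : |x| < 1) (k : ℕ) :
    Summable (fun m : ℕ => (m : ℝ) ^ k * cb m * x ^ m) := by
  have hg : Summable (fun m : ℕ => (m : ℝ) ^ k * |x| ^ m) :=
    summable_pow_mul_geometric_of_norm_lt_one k (by rwa [Real.norm_eq_abs, abs_abs])
  refine Summable.of_norm_bounded hg (fun m => ?_)
  rw [norm_mul, norm_mul, norm_pow, norm_pow, Real.norm_eq_abs, Real.norm_eq_abs,
    Real.norm_eq_abs, Nat.abs_cast, abs_of_pos (cb_pos m)]
  calc (m : ℝ) ^ k * cb m * |x| ^ m ≤ (m : ℝ) ^ k * 1 * |x| ^ m := by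
        gcongr; exact cb_le_one m
  _ = (m : ℝ) ^ k * |x| ^ m := by ring

lemma summable0 {x : ℝ} (hx : |x| < 1) : Summable (fun m : ℕ => cb m * x ^ m) := by
  simpa using summable_aux hx 0

lemma summable_shift {x : ℝ} (hx : |x| < 1) :
    Summable (fun m : ℕ => ((m : ℝ) + 1) * cb (m + 1) * x ^ m) := by
  have hg : Summable (fun m : ℕ => ((m : ℝ) ^ 1 * |x| ^ m) + |x| ^ m) :=
    (summable_pow_mul_geometric_of_norm_lt_one 1 (by rwa [Real.norm_eq_abs, abs_abs])).add
      (summable_geometric_of_lt_one (abs_nonneg x) hx)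
  refine Summable.of_norm_bounded hg (fun m => ?_)
  have h1 : 0 < cb (m + 1) := cb_pos _
  rw [norm_mul, norm_mul, norm_pow, Real.norm_eq_abs, Real.norm_eq_abs, Real.norm_eq_abs,
    abs_of_pos h1, abs_of_pos (by positivity : (0:ℝ) < (m : ℝ) + 1)]
  calc ((m : ℝ) + 1) * cb (m + 1) * |x| ^ m ≤ ((m : ℝ) + 1) * 1 * |x| ^ m := by
        gcongr; exact cb_le_one _
  _ = (m : ℝ) ^ 1 * |x| ^ m + |x| ^ m := by ring


lemma hasDerivAt_g {x : ℝ} (hx : |x| < 1) :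
    HasDerivAt (fun y => ∑' m : ℕ, cb m * y ^ m)
      (∑' m : ℕ, ((m : ℝ) + 1) * cb (m + 1) * x ^ m) x := by
  set r : ℝ := (1 + |x|) / 2 with hrdef
  have hr0 : 0 ≤ r := by positivity
  have hxr : |x| < r := by rw [hrdef]; linarith [abs_nonneg x]
  have hr1 : r < 1 := by rw [hrdef]; linarith
  have hu : Summable (fun m : ℕ => ((m : ℝ) + 1) * r ^ m) := by
    have h1 := summable_pow_mul_geometric_of_norm_lt_one (R := ℝ) 1
      (r := r) (by rwa [Real.norm_eq_abs, abs_of_nonneg hr0])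
    have h0 := summable_geometric_of_lt_one hr0 hr1
    simpa [add_mul, pow_one] using h1.add h0
  have hmem : x ∈ Metric.ball (0 : ℝ) r := by
    simpa [Metric.mem_ball, Real.dist_eq] using hxr
  refine hasDerivAt_of_tendstoUniformlyOn (l := atTop)
    (g' := fun y => ∑' m : ℕ, ((m : ℝ) + 1) * cb (m + 1) * y ^ m) (f := fun (N : ℕ) y => ∑ m ∈ range (N + 1), cb m * y ^ m)
    (f' := fun (N : ℕ) y => ∑ m ∈ range N, ((m : ℝ) + 1) * cb (m + 1) * y ^ m)
    Metric.isOpen_ball ?_ ?_ ?_ hmem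
  · have := tendstoUniformlyOn_tsum_nat (f := fun (m : ℕ) (y : ℝ) =>
      ((m : ℝ) + 1) * cb (m + 1) * y ^ m) hu (s := Metric.ball (0 : ℝ) r) ?_
    · exact this
    · intro n y hy
      have hyr : |y| < r := by simpa [Metric.mem_ball, Real.dist_eq] using hy
      rw [norm_mul, norm_mul, norm_pow, Real.norm_eq_abs, Real.norm_eq_abs, Real.norm_eq_abs,
        abs_of_pos (cb_pos _), abs_of_pos (by positivity : (0:ℝ) < (n : ℝ) + 1)]
      calc ((n : ℝ) + 1) * cb (n + 1) * |y| ^ n ≤ ((n : ℝ) + 1) * 1 * r ^ n := by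
            gcongr
            all_goals first | exact cb_le_one _ | exact hyr.le | positivity
      _ = ((n : ℝ) + 1) * r ^ n := by ring
  · filter_upwards with N y _
    have h : HasDerivAt (fun y : ℝ => ∑ m ∈ range (N + 1), cb m * y ^ m)
        (∑ m ∈ range (N + 1), cb m * ((m : ℝ) * y ^ (m - 1))) y :=
      HasDerivAt.fun_sum (fun m _ => (hasDerivAt_pow m y).const_mul (cb m))
    convert h using 1
    · rfl
    · rfl
    rw [Finset.sum_range_succ']
    simp only [Nat.cast_zero, zero_mul, mul_zero, add_zero, Nat.cast_add, Nat.cast_one,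
      Nat.add_sub_cancel]
    exact Finset.sum_congr rfl (fun m _ => by push_cast; ring)
  · intro y hy
    have hyr : |y| < 1 := lt_trans (by simpa [Metric.mem_ball, Real.dist_eq] using hy) hr1
    exact ((summable0 hyr).hasSum.tendsto_sum_nat).comp (tendsto_add_atTop_nat 1)

lemma ode {y : ℝ} (hy : |y| < 1) :
    2 * (1 - y) * (∑' m : ℕ, ((m : ℝ) + 1) * cb (m + 1) * y ^ m)
      = ∑' m : ℕ, cb m * y ^ m := by
  have s0 := summable0 hy
  have s1 : Summable (fun m : ℕ => (m : ℝ) * cb m * y ^ m) := by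
    simpa using summable_aux hy 1
  have sD := summable_shift hy
  have shift : ∑' m : ℕ, (m : ℝ) * cb m * y ^ m
      = ∑' m : ℕ, ((m : ℝ) + 1) * cb (m + 1) * y ^ (m + 1) := by
    rw [Summable.tsum_eq_zero_add s1]
    push_cast
    simp
  have hyD : y * (∑' m : ℕ, ((m : ℝ) + 1) * cb (m + 1) * y ^ m)
      = ∑' m : ℕ, ((m : ℝ) + 1) * cb (m + 1) * y ^ (m + 1) := by
    rw [← tsum_mul_left]
    exact tsum_congr fun m => by ring
  have h2D : ∑' m : ℕ, ((m : ℝ) + 1) * cb (m + 1) * y ^ m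
      = (∑' m : ℕ, (m : ℝ) * cb m * y ^ m) + (1 / 2) * ∑' m : ℕ, cb m * y ^ m := by
    have e : ∀ m : ℕ, ((m : ℝ) + 1) * cb (m + 1) * y ^ m
        = (m : ℝ) * cb m * y ^ m + (1 / 2) * (cb m * y ^ m) := by
      intro m
      linear_combination (y ^ m / 2) * cb_rec m
    calc ∑' m : ℕ, ((m : ℝ) + 1) * cb (m + 1) * y ^ m
        = ∑' m : ℕ, ((m : ℝ) * cb m * y ^ m + (1 / 2) * (cb m * y ^ m)) := tsum_congr e
      _ = (∑' m : ℕ, (m : ℝ) * cb m * y ^ m) + (1 / 2) * ∑' m : ℕ, cb m * y ^ m := by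
          rw [Summable.tsum_add s1 (s0.mul_left _), tsum_mul_left]
  have expand : 2 * (1 - y) * (∑' m : ℕ, ((m : ℝ) + 1) * cb (m + 1) * y ^ m)
      = 2 * (∑' m : ℕ, ((m : ℝ) + 1) * cb (m + 1) * y ^ m)
        - 2 * (y * (∑' m : ℕ, ((m : ℝ) + 1) * cb (m + 1) * y ^ m)) := by ring
  rw [expand, hyD, ← shift, h2D]
  ring

lemma g_sq {x : ℝ} (h0 : 0 ≤ x) (h1 : x < 1) :
    (∑' m : ℕ, cb m * x ^ m) ^ 2 * (1 - x) = 1 := by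
  set G : ℝ → ℝ := fun y => ∑' m : ℕ, cb m * y ^ m with hG
  have key : ∀ y ∈ Set.Ioo (-1 : ℝ) 1, HasDerivAt (fun z => G z ^ 2 * (1 - z)) 0 y := by
    intro y hy
    have hy' : |y| < 1 := abs_lt.2 ⟨hy.1, hy.2⟩
    have hd := hasDerivAt_g hy'
    have hode := ode hy'
    have h2 : HasDerivAt (fun z => G z ^ 2 * (1 - z))
        ((2 * G y ^ 1 * (∑' m : ℕ, ((m : ℝ) + 1) * cb (m + 1) * y ^ m)) * (1 - y)
          + G y ^ 2 * (0 - 1)) y := by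
      exact ((hd.pow 2).mul ((hasDerivAt_const y (1:ℝ)).sub (hasDerivAt_id y)))
    convert h2 using 1
    rw [pow_one]
    linear_combination (- G y) * hode
  have hmono : ∀ z ∈ Set.Icc (0 : ℝ) x, G z ^ 2 * (1 - z) = G 0 ^ 2 * (1 - 0) := by
    apply constant_of_has_deriv_right_zero
    · intro z hz
      have hz' : z ∈ Set.Ioo (-1 : ℝ) 1 := ⟨by linarith [hz.1], by linarith [hz.2]⟩
      exact ((key z hz').continuousAt).continuousWithinAt
    · intro z hz
      have hz' : z ∈ Set.Ioo (-1 : ℝ) 1 := ⟨by linarith [hz.1], by linarith [hz.2]⟩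
      exact ((key z hz').hasDerivWithinAt)
  have hx := hmono x ⟨h0, le_refl x⟩
  have hG0 : G 0 = 1 := by
    show (∑' m : ℕ, cb m * (0:ℝ) ^ m) = 1
    rw [tsum_eq_single 0 (fun m hm => by simp [zero_pow hm])]
    simp [cb_zero]
  rw [hx, hG0]
  norm_num

lemma m1_eq {x : ℝ} (hx : |x| < 1) :
    2 * (1 - x) * (∑' m : ℕ, (m : ℝ) * cb m * x ^ m)
      = x * ∑' m : ℕ, cb m * x ^ m := by
  have s0 := summable0 hx
  have s1 : Summable (fun m : ℕ => (m : ℝ) * cb m * x ^ m) := by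
    simpa using summable_aux hx 1
  have shift : ∑' m : ℕ, (m : ℝ) * cb m * x ^ m
      = ∑' m : ℕ, ((m : ℝ) + 1) * cb (m + 1) * x ^ (m + 1) := by
    rw [Summable.tsum_eq_zero_add s1]; push_cast; simp
  have e : ∀ m : ℕ, ((m : ℝ) + 1) * cb (m + 1) * x ^ (m + 1)
      = x * ((m : ℝ) * cb m * x ^ m) + (x / 2) * (cb m * x ^ m) := by
    intro m
    linear_combination (x ^ (m + 1) / 2) * cb_rec m
  have h2 : ∑' m : ℕ, ((m : ℝ) + 1) * cb (m + 1) * x ^ (m + 1)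
      = x * (∑' m : ℕ, (m : ℝ) * cb m * x ^ m) + (x / 2) * ∑' m : ℕ, cb m * x ^ m := by
    calc ∑' m : ℕ, ((m : ℝ) + 1) * cb (m + 1) * x ^ (m + 1)
        = ∑' m : ℕ, (x * ((m : ℝ) * cb m * x ^ m) + (x / 2) * (cb m * x ^ m)) := tsum_congr e
      _ = _ := by rw [Summable.tsum_add (s1.mul_left _) (s0.mul_left _), tsum_mul_left, tsum_mul_left]
  rw [shift] at *
  linear_combination 2 * h2 - 2 * shift

lemma m2_eq {x : ℝ} (hx : |x| < 1) :
    2 * (1 - x) * (∑' m : ℕ, (m : ℝ) ^ 2 * cb m * x ^ m)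
      = 3 * x * (∑' m : ℕ, (m : ℝ) * cb m * x ^ m) + x * ∑' m : ℕ, cb m * x ^ m := by
  have s0 := summable0 hx
  have s1 : Summable (fun m : ℕ => (m : ℝ) * cb m * x ^ m) := by
    simpa using summable_aux hx 1
  have s2 : Summable (fun m : ℕ => (m : ℝ) ^ 2 * cb m * x ^ m) := summable_aux hx 2
  have shift : ∑' m : ℕ, (m : ℝ) ^ 2 * cb m * x ^ m
      = ∑' m : ℕ, ((m : ℝ) + 1) ^ 2 * cb (m + 1) * x ^ (m + 1) := by
    rw [Summable.tsum_eq_zero_add s2]; push_cast; simp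
  have e : ∀ m : ℕ, ((m : ℝ) + 1) ^ 2 * cb (m + 1) * x ^ (m + 1)
      = x * ((m : ℝ) ^ 2 * cb m * x ^ m) + (3 * x / 2) * ((m : ℝ) * cb m * x ^ m)
        + (x / 2) * (cb m * x ^ m) := by
    intro m
    linear_combination (((m : ℝ) + 1) * x ^ (m + 1) / 2) * cb_rec m
  have h2 : ∑' m : ℕ, ((m : ℝ) + 1) ^ 2 * cb (m + 1) * x ^ (m + 1)
      = x * (∑' m : ℕ, (m : ℝ) ^ 2 * cb m * x ^ m)
        + (3 * x / 2) * (∑' m : ℕ, (m : ℝ) * cb m * x ^ m)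
        + (x / 2) * ∑' m : ℕ, cb m * x ^ m := by
    calc ∑' m : ℕ, ((m : ℝ) + 1) ^ 2 * cb (m + 1) * x ^ (m + 1)
        = ∑' m : ℕ, (x * ((m : ℝ) ^ 2 * cb m * x ^ m) + (3 * x / 2) * ((m : ℝ) * cb m * x ^ m)
            + (x / 2) * (cb m * x ^ m)) := tsum_congr e
      _ = _ := by
          rw [Summable.tsum_add ((s2.mul_left _).add (s1.mul_left _)) (s0.mul_left _),
            Summable.tsum_add (s2.mul_left _) (s1.mul_left _), tsum_mul_left, tsum_mul_left, tsum_mul_left]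
  linear_combination 2 * shift + 2 * h2


end Stmt12

open Stmt12 in
/-- Fisher information of photon-number measurement on a squeezed vacuum:
with `p(2m; ξ) = tanh(ξ)^{2m}/cosh(ξ) · (2m)!/(4^m (m!)²)` (odd probabilities vanish),
`∑ₘ (∂_ξ p(2m;ξ))² / p(2m;ξ) = 2` for all `ξ > 0`. -/
theorem stmt_12 (ξ : ℝ) (hξ : 0 < ξ) :
    let p : ℕ → ℝ → ℝ := fun m t =>
      Real.tanh t ^ (2 * m) / Real.cosh t *
        (((2 * m).factorial : ℝ) / ((4 : ℝ) ^ m * ((m.factorial : ℝ)) ^ 2))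
    ∑' m : ℕ, (deriv (p m) ξ) ^ 2 / p m ξ = 2 := by
  intro p
  have hpfun : ∀ m : ℕ, p m = fun t =>
      Real.tanh t ^ (2 * m) / Real.cosh t *
        (((2 * m).factorial : ℝ) / ((4 : ℝ) ^ m * ((m.factorial : ℝ)) ^ 2)) := fun m => rfl
  set s := Real.sinh ξ with hsdef
  set c := Real.cosh ξ with hcdef
  set T := Real.tanh ξ with hTdef
  have hc0 : 0 < c := Real.cosh_pos ξ
  have hs0 : 0 < s := Real.sinh_pos_iff.2 hξ
  have hT : T = s / c := Real.tanh_eq_sinh_div_cosh ξ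
  have hTpos : 0 < T := by rw [hT]; positivity
  have hid : c ^ 2 - s ^ 2 = 1 := Real.cosh_sq_sub_sinh_sq ξ
  have hT1 : T < 1 := by
    rw [hT, div_lt_one hc0]; nlinarith
  set x := T ^ 2 with hxdef
  have hx0 : 0 < x := by positivity
  have hx1 : x < 1 := by nlinarith
  have hxabs : |x| < 1 := by rw [abs_of_pos hx0]; exact hx1
  have hsTc : s = T * c := by rw [hT]; field_simp
  -- factorials equal cb
  have hK : ∀ m : ℕ, (((2 * m).factorial : ℝ) / ((4 : ℝ) ^ m * ((m.factorial : ℝ)) ^ 2))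
      = cb m := by
    intro m
    rw [cb]
    have h := Nat.choose_mul_factorial_mul_factorial (show m ≤ 2 * m by omega)
    have h2m : 2 * m - m = m := by omega
    rw [h2m] at h
    have hfac : ((2 * m).factorial : ℝ) = (Nat.centralBinom m : ℝ) * (m.factorial : ℝ) ^ 2 := by
      rw [Nat.centralBinom]
      exact_mod_cast by rw [← h]; ring
    rw [hfac]
    have hne : ((m.factorial : ℝ)) ^ 2 ≠ 0 := by positivity
    field_simp
  -- derivative formula
  have hderiv : ∀ m : ℕ, deriv (p m) ξ =
      (((2 * m : ℕ) : ℝ) * T ^ (2 * m - 1) * ((c * c - s * s) / c ^ 2) * c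
          - T ^ (2 * m) * s) / c ^ 2
        * (((2 * m).factorial : ℝ) / ((4 : ℝ) ^ m * ((m.factorial : ℝ)) ^ 2)) := by
    intro m
    have htanh : HasDerivAt Real.tanh ((c * c - s * s) / c ^ 2) ξ := by
      have he : Real.tanh = fun t => Real.sinh t / Real.cosh t :=
        funext fun t => Real.tanh_eq_sinh_div_cosh t
      rw [he]
      exact (Real.hasDerivAt_sinh ξ).div (Real.hasDerivAt_cosh ξ) (ne_of_gt hc0)
    have hpow := htanh.pow (2 * m)
    have hdiv := hpow.div (Real.hasDerivAt_cosh ξ) (ne_of_gt hc0)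
    have hp := hdiv.mul_const
      (((2 * m).factorial : ℝ) / ((4 : ℝ) ^ m * ((m.factorial : ℝ)) ^ 2))
    rw [hpfun m]
    exact hp.deriv
  -- per-term value
  have hterm : ∀ m : ℕ, (deriv (p m) ξ) ^ 2 / p m ξ
      = (4 / (s ^ 2 * c ^ 3)) * ((m : ℝ) ^ 2 * cb m * x ^ m)
        - (4 / c ^ 3) * ((m : ℝ) * cb m * x ^ m)
        + (s ^ 2 / c ^ 3) * (cb m * x ^ m) := by
    intro m
    rw [hderiv m, hpfun m]
    simp only [hK m]
    have hcb := cb_pos m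
    match m with
    | 0 =>
      norm_num [cb_zero]
      rw [hsTc]
      field_simp
      ring
    | (k + 1) =>
      have e1 : 2 * (k + 1) - 1 = 2 * k + 1 := by omega
      have f1 : T ^ (2 * (k + 1) - 1) = x ^ k * T := by
        rw [e1, pow_succ, pow_mul, ← hxdef]
      have f2 : T ^ (2 * (k + 1)) = x ^ k * x := by
        rw [pow_mul, ← hxdef, pow_succ]
      have f3 : x ^ (k + 1) = x ^ k * x := pow_succ x k
      rw [f1, f2, f3, hsTc]
      rw [hsTc] at hid
      have hA : 0 < x ^ k := by positivity
      push_cast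
      field_simp
      ring_nf
      rw [← hcdef, hxdef]
      linear_combination (T ^ 4 * (2 * ((k : ℝ) + 1)) *
        (2 * ((k : ℝ) + 1) * (c ^ 2 - T ^ 2 * c ^ 2 + 1) - 2 * T ^ 2 * c ^ 2)) * hid
  rw [tsum_congr hterm]
  have S0s := summable0 hxabs
  have S1s : Summable (fun m : ℕ => (m : ℝ) * cb m * x ^ m) := by
    simpa using summable_aux hxabs 1
  have S2s : Summable (fun m : ℕ => (m : ℝ) ^ 2 * cb m * x ^ m) := summable_aux hxabs 2
  rw [Summable.tsum_add ((S2s.mul_left _).sub (S1s.mul_left _)) (S0s.mul_left _),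
    Summable.tsum_sub (S2s.mul_left _) (S1s.mul_left _), tsum_mul_left, tsum_mul_left, tsum_mul_left]
  have hg := g_sq hx0.le hx1
  have hm1 := m1_eq hxabs
  have hm2 := m2_eq hxabs
  have hS0ge : 1 ≤ ∑' m : ℕ, cb m * x ^ m := by
    have h := Summable.le_tsum S0s 0 (fun j _ => (mul_pos (cb_pos j) (pow_pos hx0 j)).le)
    simpa [cb_zero] using h
  set S0 := ∑' m : ℕ, cb m * x ^ m with hS0def
  set M1 := ∑' m : ℕ, (m : ℝ) * cb m * x ^ m with hM1def
  set M2 := ∑' m : ℕ, (m : ℝ) ^ 2 * cb m * x ^ m with hM2def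
  have h1x : 1 - x = 1 / c ^ 2 := by
    rw [hxdef, hT]
    field_simp
    linear_combination hid
  have hS0c : S0 = c := by
    rw [h1x] at hg
    have hcne : (c : ℝ) ^ 2 ≠ 0 := by positivity
    field_simp at hg
    exact (pow_left_inj₀ (by linarith) hc0.le two_ne_zero).mp hg
  rw [hS0c] at hm1 hm2 ⊢
  rw [h1x] at hm1 hm2
  have hM1 : M1 = x * c ^ 3 / 2 := by
    field_simp at hm1 ⊢
    linarith
  have hM2 : M2 = (3 * x * (x * c ^ 3 / 2) + x * c) * c ^ 2 / 2 := by
    rw [← hM1]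
    field_simp at hm2 ⊢
    linarith
  rw [hM1, hM2]
  have hxv : x = s ^ 2 / c ^ 2 := by
    rw [hxdef, hT]
    field_simp
  rw [hxv]
  field_simp
  ring_nf
  linear_combination (-8 : ℝ) * hid
end
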